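/- The linear Toda bracket π₁ and the quadratic Toda bracket π₂ on ℝ^{2n} are compatible: their sum π₁ + π₂ also satisfies the Jacobi identity. -/

import Mathlib

/-- Kronecker delta as a real number. -/
def kron (p : Prop) [Decidable p] : ℝ := if p then 1 else 0
/-- The Poisson bracket of two functions determined by a bivector `P` (this is the
extension of the coordinate brackets by bilinearity, antisymmetry and the Leibniz rule):
`{F,G}(x) = ∑ i j, P x i j * ∂F/∂xᵢ * ∂G/∂xⱼ`. -/
noncomputable def pb {k : Type} [Fintype k] [DecidableEq k]
    (P : (k → ℝ) → k → k → ℝ) (F G : (k → ℝ) → ℝ) : (k → ℝ) → ℝ :=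
  fun x => ∑ i, ∑ j, P x i j * fderiv ℝ F x (Pi.single i 1) * fderiv ℝ G x (Pi.single j 1)
/-- The linear Toda bivector: coordinates `a₁,…,a_m` (indices `Sum.inl`) and
`b₁,…,b_n` (indices `Sum.inr`), with `{aᵢ,bⱼ} = aᵢ(δᵢⱼ − δ_{i+1,j})`,
`{aᵢ,aⱼ} = {bᵢ,bⱼ} = 0` (indices are 0-based in Lean, 1-based in the literature). -/
noncomputable def todaLin (m n : ℕ) (x : Fin m ⊕ Fin n → ℝ) :
    Fin m ⊕ Fin n → Fin m ⊕ Fin n → ℝ := fun u v =>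
  match u, v with
  | Sum.inl i, Sum.inr j => x (Sum.inl i) * (kron ((i : ℕ) = (j : ℕ)) - kron ((i : ℕ) + 1 = (j : ℕ)))
  | Sum.inr j, Sum.inl i => -(x (Sum.inl i) * (kron ((i : ℕ) = (j : ℕ)) - kron ((i : ℕ) + 1 = (j : ℕ))))
  | _, _ => 0
/-- The quadratic Toda bivector: `{aᵢ,aⱼ} = aᵢaⱼ(δ_{i,j+1} − δ_{i+1,j})`,
`{aᵢ,bⱼ} = aᵢbⱼ(δᵢⱼ − δ_{i+1,j})`, `{bᵢ,b_{i+1}} = -aᵢ` (the antisymmetric extension of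
`{bᵢ,bⱼ} = aᵢ(δ_{i,j+1} − δ_{i+1,j})`). Indices 0-based in Lean, 1-based in the literature. -/
noncomputable def todaQuad (m n : ℕ) (x : Fin m ⊕ Fin n → ℝ) :
    Fin m ⊕ Fin n → Fin m ⊕ Fin n → ℝ := fun u v =>
  match u, v with
  | Sum.inl i, Sum.inl j =>
      x (Sum.inl i) * x (Sum.inl j) * (kron ((i : ℕ) = (j : ℕ) + 1) - kron ((i : ℕ) + 1 = (j : ℕ)))
  | Sum.inl i, Sum.inr j =>
      x (Sum.inl i) * x (Sum.inr j) * (kron ((i : ℕ) = (j : ℕ)) - kron ((i : ℕ) + 1 = (j : ℕ)))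
  | Sum.inr j, Sum.inl i =>
      -(x (Sum.inl i) * x (Sum.inr j) * (kron ((i : ℕ) = (j : ℕ)) - kron ((i : ℕ) + 1 = (j : ℕ))))
  | Sum.inr i, Sum.inr j =>
      (if h : (j : ℕ) + 1 = (i : ℕ) ∧ (j : ℕ) < m then x (Sum.inl ⟨(j : ℕ), h.2⟩) else 0)
      - (if h : (i : ℕ) + 1 = (j : ℕ) ∧ (i : ℕ) < m then x (Sum.inl ⟨(i : ℕ), h.2⟩) else 0)

section general
variable {k : Type} [Fintype k] [DecidableEq k]

lemma hasFDerivAt_pd {F : (k → ℝ) → ℝ} (hF : ContDiff ℝ ⊤ F) (x : k → ℝ) (i : k) :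
    HasFDerivAt (fun y => fderiv ℝ F y (Pi.single i 1))
      ((fderiv ℝ (fderiv ℝ F) x).flip (Pi.single i 1)) x := by
  have h1 : HasFDerivAt (fderiv ℝ F) (fderiv ℝ (fderiv ℝ F) x) x :=
    (((hF.fderiv_right (m := 1) le_top).differentiable one_ne_zero) x).hasFDerivAt
  simpa using h1.clm_apply (hasFDerivAt_const (Pi.single i 1) x)

lemma hasFDerivAt_pb (P : (k → ℝ) → k → k → ℝ)
    (hP : ∀ i j, ContDiff ℝ ⊤ (fun x => P x i j))
    {F G : (k → ℝ) → ℝ} (hF : ContDiff ℝ ⊤ F) (hG : ContDiff ℝ ⊤ G) (x : k → ℝ) :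
    HasFDerivAt (pb P F G)
      (∑ i, ∑ j,
        ((P x i j * fderiv ℝ F x (Pi.single i 1)) • ((fderiv ℝ (fderiv ℝ G) x).flip (Pi.single j 1))
         + fderiv ℝ G x (Pi.single j 1) •
            ((P x i j • ((fderiv ℝ (fderiv ℝ F) x).flip (Pi.single i 1)))
              + fderiv ℝ F x (Pi.single i 1) • fderiv ℝ (fun y => P y i j) x))) x := by
  apply HasFDerivAt.fun_sum
  intro i _
  apply HasFDerivAt.fun_sum
  intro j _
  exact (((((hP i j).differentiable (by simp)) x).hasFDerivAt.mul
    (hasFDerivAt_pd hF x i)).mul (hasFDerivAt_pd hG x j))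

lemma fderiv_pb_apply (P : (k → ℝ) → k → k → ℝ)
    (hP : ∀ i j, ContDiff ℝ ⊤ (fun x => P x i j))
    {F G : (k → ℝ) → ℝ} (hF : ContDiff ℝ ⊤ F) (hG : ContDiff ℝ ⊤ G) (x v : k → ℝ) :
    fderiv ℝ (pb P F G) x v = ∑ i, ∑ j,
      (fderiv ℝ (fun y => P y i j) x v * fderiv ℝ F x (Pi.single i 1) * fderiv ℝ G x (Pi.single j 1)
       + P x i j * (fderiv ℝ (fderiv ℝ F) x v (Pi.single i 1) * fderiv ℝ G x (Pi.single j 1)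
                  + fderiv ℝ F x (Pi.single i 1) * fderiv ℝ (fderiv ℝ G) x v (Pi.single j 1))) := by
  rw [(hasFDerivAt_pb P hP hF hG x).fderiv]
  simp only [ContinuousLinearMap.sum_apply, ContinuousLinearMap.add_apply,
    ContinuousLinearMap.smul_apply, ContinuousLinearMap.flip_apply, smul_eq_mul]
  exact Finset.sum_congr rfl fun i _ => Finset.sum_congr rfl fun j _ => by ring
end general

section alg
variable {k : Type} [Fintype k]

def S4 (f : k → k → k → k → ℝ) : ℝ := ∑ t : k × k × k × k, f t.1 t.2.1 t.2.2.1 t.2.2.2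

lemma S4_eq (f : k → k → k → k → ℝ) : S4 f = ∑ m, ∑ i, ∑ j, ∑ l, f m i j l := by
  simp [S4, Fintype.sum_prod_type]

lemma S4_eq' (f : k → k → k → k → ℝ) : S4 f = ∑ i, ∑ j, ∑ l, ∑ m, f m i j l := by
  rw [S4_eq]
  rw [Finset.sum_comm (f := fun m i => ∑ j, ∑ l, f m i j l)]
  refine Finset.sum_congr rfl fun i _ => ?_
  rw [Finset.sum_comm (f := fun m j => ∑ l, f m i j l)]
  exact Finset.sum_congr rfl fun j _ => Finset.sum_comm

lemma S4_perm (σ : k × k × k × k ≃ k × k × k × k) (f g : k → k → k → k → ℝ)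
    (h : ∀ t : k × k × k × k, f t.1 t.2.1 t.2.2.1 t.2.2.2
      = g (σ t).1 (σ t).2.1 (σ t).2.2.1 (σ t).2.2.2) : S4 f = S4 g :=
  Fintype.sum_equiv σ _ _ h

lemma S4_add (f g : k → k → k → k → ℝ) :
    S4 f + S4 g = S4 (fun m i j l => f m i j l + g m i j l) :=
  (Finset.sum_add_distrib).symm

lemma S4_neg (f : k → k → k → k → ℝ) : S4 (fun m i j l => - f m i j l) = - S4 f := by
  simp [S4]

def pMJLI : k × k × k × k ≃ k × k × k × k :=
  ⟨fun t => (t.1, t.2.2.1, t.2.2.2, t.2.1), fun t => (t.1, t.2.2.2, t.2.1, t.2.2.1),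
   fun _ => rfl, fun _ => rfl⟩

def pMLIJ : k × k × k × k ≃ k × k × k × k :=
  ⟨fun t => (t.1, t.2.2.2, t.2.1, t.2.2.1), fun t => (t.1, t.2.2.1, t.2.2.2, t.2.1),
   fun _ => rfl, fun _ => rfl⟩

def pSwap12 : k × k × k × k ≃ k × k × k × k :=
  ⟨fun t => (t.2.1, t.1, t.2.2.1, t.2.2.2), fun t => (t.2.1, t.1, t.2.2.1, t.2.2.2),
   fun _ => rfl, fun _ => rfl⟩

lemma dd_cancel (Q : k → k → ℝ) (hQa : ∀ i j, Q j i = - Q i j)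
    (dd : k → k → ℝ) (hdd : ∀ i j, dd i j = dd j i) (u v : k → ℝ) :
    S4 (fun m i j l => Q m l * Q i j * dd m i * u j * v l)
      + S4 (fun m i j l => Q m l * Q i j * v i * dd m j * u l) = 0 := by
  have h2 : S4 (fun m i j l => Q m l * Q i j * v i * dd m j * u l)
      = S4 (fun m i j l => Q m j * Q l i * dd m i * u j * v l) := by
    apply S4_perm pMJLI
    intro t
    dsimp only [pMJLI, Equiv.coe_fn_mk]
    ring
  rw [h2, S4_add]
  have h3 : S4 (fun m i j l => Q m l * Q i j * dd m i * u j * v l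
        + Q m j * Q l i * dd m i * u j * v l)
      = S4 (fun m i j l => -(Q m l * Q i j * dd m i * u j * v l
        + Q m j * Q l i * dd m i * u j * v l)) := by
    apply S4_perm pSwap12
    intro t
    dsimp only [pSwap12, Equiv.coe_fn_mk]
    rw [hdd t.2.1 t.1, hQa t.2.2.2 t.2.1, hQa t.1 t.2.2.2]
    ring
  rw [S4_neg] at h3
  linarith

lemma jacobi_alg (Q : k → k → ℝ) (dP : k → k → k → ℝ)
    (dF dG dH : k → ℝ) (ddF ddG ddH : k → k → ℝ)
    (hQa : ∀ i j, Q j i = - Q i j)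
    (hsF : ∀ i j, ddF i j = ddF j i) (hsG : ∀ i j, ddG i j = ddG j i)
    (hsH : ∀ i j, ddH i j = ddH j i)
    (hJ : ∀ i j l, ∑ m, (Q m l * dP i j m + Q m i * dP j l m + Q m j * dP l i m) = 0) :
    (∑ m, ∑ l, Q m l * (∑ i, ∑ j, (dP i j m * dF i * dG j
        + Q i j * (ddF m i * dG j + dF i * ddG m j))) * dH l)
    + (∑ m, ∑ l, Q m l * (∑ i, ∑ j, (dP i j m * dG i * dH j
        + Q i j * (ddG m i * dH j + dG i * ddH m j))) * dF l)
    + (∑ m, ∑ l, Q m l * (∑ i, ∑ j, (dP i j m * dH i * dF j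
        + Q i j * (ddH m i * dF j + dH i * ddF m j))) * dG l) = 0 := by
  have expand : ∀ (u w z : k → ℝ) (ddu ddw : k → k → ℝ),
      (∑ m, ∑ l, Q m l * (∑ i, ∑ j, (dP i j m * u i * w j
        + Q i j * (ddu m i * w j + u i * ddw m j))) * z l)
      = S4 (fun m i j l => Q m l * dP i j m * u i * w j * z l)
        + (S4 (fun m i j l => Q m l * Q i j * ddu m i * w j * z l)
          + S4 (fun m i j l => Q m l * Q i j * u i * ddw m j * z l)) := by
    intro u w z ddu ddw
    rw [S4_add, S4_add, S4_eq]
    calc (∑ m, ∑ l, Q m l * (∑ i, ∑ j, (dP i j m * u i * w j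
            + Q i j * (ddu m i * w j + u i * ddw m j))) * z l)
        = ∑ m, ∑ l, ∑ i, ∑ j, (Q m l * (dP i j m * u i * w j
            + Q i j * (ddu m i * w j + u i * ddw m j)) * z l) := by
          refine Finset.sum_congr rfl fun m _ => Finset.sum_congr rfl fun l _ => ?_
          rw [Finset.mul_sum, Finset.sum_mul]
          refine Finset.sum_congr rfl fun i _ => ?_
          rw [Finset.mul_sum, Finset.sum_mul]
      _ = ∑ m, ∑ i, ∑ j, ∑ l, (Q m l * (dP i j m * u i * w j
            + Q i j * (ddu m i * w j + u i * ddw m j)) * z l) := by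
          refine Finset.sum_congr rfl fun m _ => ?_
          rw [Finset.sum_comm]
          refine Finset.sum_congr rfl fun i _ => ?_
          exact Finset.sum_comm
      _ = ∑ m, ∑ i, ∑ j, ∑ l, (Q m l * dP i j m * u i * w j * z l
            + (Q m l * Q i j * ddu m i * w j * z l + Q m l * Q i j * u i * ddw m j * z l)) := by
          refine Finset.sum_congr rfl fun m _ => Finset.sum_congr rfl fun i _ =>
            Finset.sum_congr rfl fun j _ => Finset.sum_congr rfl fun l _ => by ring
  rw [expand dF dG dH ddF ddG, expand dG dH dF ddG ddH, expand dH dF dG ddH ddF]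
  have c2 : S4 (fun m i j l => Q m l * dP i j m * dG i * dH j * dF l)
      = S4 (fun m i j l => Q m i * dP j l m * dF i * dG j * dH l) := by
    apply S4_perm pMLIJ
    intro t
    dsimp only [pMLIJ, Equiv.coe_fn_mk]
    ring
  have c3 : S4 (fun m i j l => Q m l * dP i j m * dH i * dF j * dG l)
      = S4 (fun m i j l => Q m j * dP l i m * dF i * dG j * dH l) := by
    apply S4_perm pMJLI
    intro t
    dsimp only [pMJLI, Equiv.coe_fn_mk]
    ring
  rw [c2, c3]
  have hdP : S4 (fun m i j l => Q m l * dP i j m * dF i * dG j * dH l)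
      + S4 (fun m i j l => Q m i * dP j l m * dF i * dG j * dH l)
      + S4 (fun m i j l => Q m j * dP l i m * dF i * dG j * dH l) = 0 := by
    rw [S4_add, S4_add, S4_eq']
    refine Finset.sum_eq_zero fun i _ => Finset.sum_eq_zero fun j _ =>
      Finset.sum_eq_zero fun l _ => ?_
    have hh := hJ i j l
    calc (∑ m, (Q m l * dP i j m * dF i * dG j * dH l
          + Q m i * dP j l m * dF i * dG j * dH l
          + Q m j * dP l i m * dF i * dG j * dH l))
        = (∑ m, (Q m l * dP i j m + Q m i * dP j l m + Q m j * dP l i m))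
            * (dF i * dG j * dH l) := by
          rw [Finset.sum_mul]; exact Finset.sum_congr rfl fun m _ => by ring
      _ = 0 := by rw [hh, zero_mul]
  have d1 := dd_cancel Q hQa ddF hsF dG dH
  have d2 := dd_cancel Q hQa ddG hsG dH dF
  have d3 := dd_cancel Q hQa ddH hsH dF dG
  linarith
end alg

theorem jacobi_of_bivector {k : Type} [Fintype k] [DecidableEq k]
    (P : (k → ℝ) → k → k → ℝ)
    (hP : ∀ i j, ContDiff ℝ ⊤ (fun x => P x i j))
    (hA : ∀ x i j, P x j i = - P x i j)
    (hJ : ∀ (x : k → ℝ) (i j l : k),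
      ∑ m : k, (P x m l * fderiv ℝ (fun y => P y i j) x (Pi.single m 1)
        + P x m i * fderiv ℝ (fun y => P y j l) x (Pi.single m 1)
        + P x m j * fderiv ℝ (fun y => P y l i) x (Pi.single m 1)) = 0)
    (F G H : (k → ℝ) → ℝ) (hF : ContDiff ℝ ⊤ F) (hG : ContDiff ℝ ⊤ G) (hH : ContDiff ℝ ⊤ H) :
    pb P (pb P F G) H + pb P (pb P G H) F + pb P (pb P H F) G = 0 := by
  funext x
  simp only [Pi.add_apply, Pi.zero_apply]
  have hpb : ∀ (A B : (k → ℝ) → ℝ), ContDiff ℝ ⊤ A → ContDiff ℝ ⊤ B → pb P (pb P A B) H = pb P (pb P A B) H := fun _ _ _ _ => rfl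
  have key : ∀ (A B C : (k → ℝ) → ℝ), ContDiff ℝ ⊤ A → ContDiff ℝ ⊤ B →
      pb P (pb P A B) C x = ∑ m, ∑ l, P x m l *
        (∑ i, ∑ j, (fderiv ℝ (fun y => P y i j) x (Pi.single m 1) * fderiv ℝ A x (Pi.single i 1) * fderiv ℝ B x (Pi.single j 1)
          + P x i j * (fderiv ℝ (fderiv ℝ A) x (Pi.single m 1) (Pi.single i 1) * fderiv ℝ B x (Pi.single j 1)
            + fderiv ℝ A x (Pi.single i 1) * fderiv ℝ (fderiv ℝ B) x (Pi.single m 1) (Pi.single j 1))))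
        * fderiv ℝ C x (Pi.single l 1) := by
    intro A B C hA' hB'
    have h0 : pb P (pb P A B) C x = ∑ m, ∑ l, P x m l * fderiv ℝ (pb P A B) x (Pi.single m 1)
        * fderiv ℝ C x (Pi.single l 1) := rfl
    rw [h0]
    exact Finset.sum_congr rfl fun m _ => Finset.sum_congr rfl fun l _ => by
      rw [fderiv_pb_apply P hP hA' hB' x (Pi.single m 1)]
  rw [key F G H hF hG, key G H F hG hH, key H F G hH hF]
  exact jacobi_alg (P x) _ _ _ _ _ _ _
    (hA x)
    (fun i j => (hF.contDiffAt.isSymmSndFDerivAt le_top) _ _)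
    (fun i j => (hG.contDiffAt.isSymmSndFDerivAt le_top) _ _)
    (fun i j => (hH.contDiffAt.isSymmSndFDerivAt le_top) _ _)
    (fun i j l => hJ x i j l)


-- ############ part B basics
abbrev K (n : ℕ) := Fin n ⊕ Fin n

noncomputable def QT (n : ℕ) (x : K n → ℝ) (u v : K n) : ℝ :=
  todaLin n n x u v + todaQuad n n x u v

/-- opaque version of the Kronecker delta on ℕ -/
def kd (a b : ℕ) : ℝ := kron (a = b)

lemma kron_def (p : Prop) [Decidable p] : kron p = if p then 1 else 0 := rfl

lemma kd_def (a b : ℕ) : kd a b = if a = b then 1 else 0 := rfl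

@[simp] lemma kron_inl_inl {n : ℕ} (a b : Fin n) :
    kron ((Sum.inl a : K n) = Sum.inl b) = kron (a = b) := by
  simp [kron]

@[simp] lemma kron_inl_inr {n : ℕ} (a b : Fin n) :
    kron ((Sum.inl a : K n) = Sum.inr b) = 0 := by simp [kron]

@[simp] lemma kron_inr_inl {n : ℕ} (a b : Fin n) :
    kron ((Sum.inr a : K n) = Sum.inl b) = 0 := by simp [kron]

@[simp] lemma kron_inr_inr {n : ℕ} (a b : Fin n) :
    kron ((Sum.inr a : K n) = Sum.inr b) = kron (a = b) := by simp [kron]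

lemma sum_kron {n : ℕ} (c : Fin n) (g : Fin n → ℝ) :
    ∑ r : Fin n, kron (c = r) * g r = g c := by
  simp [kron, ite_mul]

-- component closed forms
lemma QT_aa {n : ℕ} (x : K n → ℝ) (i j : Fin n) :
    QT n x (Sum.inl i) (Sum.inl j)
      = x (Sum.inl i) * x (Sum.inl j) * (kd (i : ℕ) ((j : ℕ) + 1) - kd ((i : ℕ) + 1) (j : ℕ)) := by
  simp [QT, todaLin, todaQuad, kd]

lemma QT_ab {n : ℕ} (x : K n → ℝ) (i j : Fin n) :
    QT n x (Sum.inl i) (Sum.inr j)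
      = x (Sum.inl i) * (1 + x (Sum.inr j)) * (kd (i : ℕ) (j : ℕ) - kd ((i : ℕ) + 1) (j : ℕ)) := by
  simp only [QT, todaLin, todaQuad, kd]
  ring

lemma QT_ba {n : ℕ} (x : K n → ℝ) (i j : Fin n) :
    QT n x (Sum.inr j) (Sum.inl i)
      = -(x (Sum.inl i) * (1 + x (Sum.inr j)) * (kd (i : ℕ) (j : ℕ) - kd ((i : ℕ) + 1) (j : ℕ))) := by
  simp only [QT, todaLin, todaQuad, kd]
  ring

lemma dite_toda {n : ℕ} (x : K n → ℝ) (c : Prop) [Decidable c] (q : Fin n) :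
    (if h : c ∧ (q : ℕ) < n then x (Sum.inl ⟨(q : ℕ), h.2⟩) else 0)
      = x (Sum.inl q) * kron c := by
  by_cases h : c
  · rw [dif_pos ⟨h, q.isLt⟩, kron_def, if_pos h, mul_one]
  · rw [dif_neg (fun hc => h hc.1), kron_def, if_neg h, mul_zero]

lemma QT_bb {n : ℕ} (x : K n → ℝ) (i j : Fin n) :
    QT n x (Sum.inr i) (Sum.inr j)
      = x (Sum.inl j) * kd ((j : ℕ) + 1) (i : ℕ) - x (Sum.inl i) * kd ((i : ℕ) + 1) (j : ℕ) := by
  simp only [QT, todaLin, todaQuad, dite_toda, kd]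
  ring

noncomputable def dQ (n : ℕ) (x : K n → ℝ) (u v m : K n) : ℝ :=
  fderiv ℝ (fun y => QT n y u v) x (Pi.single m 1)

section deriv
variable {n : ℕ} (x : K n → ℝ)

lemma hasFD_coord (u : K n) :
    HasFDerivAt (fun y : K n → ℝ => y u)
      (ContinuousLinearMap.proj u : (K n → ℝ) →L[ℝ] ℝ) x :=
  ((ContinuousLinearMap.proj (R := ℝ) (φ := fun _ : K n => ℝ) u).hasFDerivAt (x := x))

lemma dQ_aa (i j : Fin n) (m : K n) :
    dQ n x (Sum.inl i) (Sum.inl j) m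
      = (kron ((Sum.inl i : K n) = m) * x (Sum.inl j)
          + x (Sum.inl i) * kron ((Sum.inl j : K n) = m))
        * (kd (i : ℕ) ((j : ℕ) + 1) - kd ((i : ℕ) + 1) (j : ℕ)) := by
  unfold dQ
  have hfun : (fun y : K n → ℝ => QT n y (Sum.inl i) (Sum.inl j))
      = fun y => y (Sum.inl i) * y (Sum.inl j)
          * (kd (i : ℕ) ((j : ℕ) + 1) - kd ((i : ℕ) + 1) (j : ℕ)) :=
    funext fun y => QT_aa y i j
  rw [hfun]
  have h2 : fderiv ℝ (fun y : K n → ℝ => y (Sum.inl i) * y (Sum.inl j)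
        * (kd (i : ℕ) ((j : ℕ) + 1) - kd ((i : ℕ) + 1) (j : ℕ))) x
      = (kd (i : ℕ) ((j : ℕ) + 1) - kd ((i : ℕ) + 1) (j : ℕ))
          • (x (Sum.inl i) • (ContinuousLinearMap.proj (Sum.inl j) : (K n → ℝ) →L[ℝ] ℝ)
            + x (Sum.inl j) • (ContinuousLinearMap.proj (Sum.inl i) : (K n → ℝ) →L[ℝ] ℝ)) :=
    (((hasFD_coord x (Sum.inl i)).mul (hasFD_coord x (Sum.inl j))).mul_const _).fderiv
  rw [h2]
  simp only [ContinuousLinearMap.smul_apply, ContinuousLinearMap.add_apply,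
    ContinuousLinearMap.proj_apply, Pi.single_apply, smul_eq_mul, kron_def]
  split_ifs <;> ring

lemma dQ_ab (i j : Fin n) (m : K n) :
    dQ n x (Sum.inl i) (Sum.inr j) m
      = (kron ((Sum.inl i : K n) = m) * (1 + x (Sum.inr j))
          + x (Sum.inl i) * kron ((Sum.inr j : K n) = m))
        * (kd (i : ℕ) (j : ℕ) - kd ((i : ℕ) + 1) (j : ℕ)) := by
  unfold dQ
  have hfun : (fun y : K n → ℝ => QT n y (Sum.inl i) (Sum.inr j))
      = fun y => y (Sum.inl i) * (1 + y (Sum.inr j))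
          * (kd (i : ℕ) (j : ℕ) - kd ((i : ℕ) + 1) (j : ℕ)) :=
    funext fun y => QT_ab y i j
  rw [hfun]
  have h2 : fderiv ℝ (fun y : K n → ℝ => y (Sum.inl i) * (1 + y (Sum.inr j))
        * (kd (i : ℕ) (j : ℕ) - kd ((i : ℕ) + 1) (j : ℕ))) x
      = (kd (i : ℕ) (j : ℕ) - kd ((i : ℕ) + 1) (j : ℕ))
          • (x (Sum.inl i) • ((0 : (K n → ℝ) →L[ℝ] ℝ) + (ContinuousLinearMap.proj (Sum.inr j) : (K n → ℝ) →L[ℝ] ℝ))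
            + (1 + x (Sum.inr j)) • (ContinuousLinearMap.proj (Sum.inl i) : (K n → ℝ) →L[ℝ] ℝ)) :=
    (((hasFD_coord x (Sum.inl i)).mul ((hasFDerivAt_const (1:ℝ) x).add (hasFD_coord x (Sum.inr j)))).mul_const _).fderiv
  rw [h2]
  simp only [ContinuousLinearMap.smul_apply, ContinuousLinearMap.add_apply,
    ContinuousLinearMap.zero_apply, ContinuousLinearMap.proj_apply, Pi.single_apply,
    smul_eq_mul, kron_def]
  split_ifs <;> ring

lemma dQ_ba (i j : Fin n) (m : K n) :
    dQ n x (Sum.inr j) (Sum.inl i) m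
      = -((kron ((Sum.inl i : K n) = m) * (1 + x (Sum.inr j))
          + x (Sum.inl i) * kron ((Sum.inr j : K n) = m))
        * (kd (i : ℕ) (j : ℕ) - kd ((i : ℕ) + 1) (j : ℕ))) := by
  unfold dQ
  have hfun : (fun y : K n → ℝ => QT n y (Sum.inr j) (Sum.inl i))
      = fun y => -(y (Sum.inl i) * (1 + y (Sum.inr j))
          * (kd (i : ℕ) (j : ℕ) - kd ((i : ℕ) + 1) (j : ℕ))) :=
    funext fun y => QT_ba y i j
  rw [hfun]
  have h2 : fderiv ℝ (fun y : K n → ℝ => -(y (Sum.inl i) * (1 + y (Sum.inr j))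
        * (kd (i : ℕ) (j : ℕ) - kd ((i : ℕ) + 1) (j : ℕ)))) x
      = -((kd (i : ℕ) (j : ℕ) - kd ((i : ℕ) + 1) (j : ℕ))
          • (x (Sum.inl i) • ((0 : (K n → ℝ) →L[ℝ] ℝ) + (ContinuousLinearMap.proj (Sum.inr j) : (K n → ℝ) →L[ℝ] ℝ))
            + (1 + x (Sum.inr j)) • (ContinuousLinearMap.proj (Sum.inl i) : (K n → ℝ) →L[ℝ] ℝ))) :=
    ((((hasFD_coord x (Sum.inl i)).mul ((hasFDerivAt_const (1:ℝ) x).add (hasFD_coord x (Sum.inr j)))).mul_const _).neg).fderiv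
  rw [h2]
  simp only [ContinuousLinearMap.neg_apply, ContinuousLinearMap.smul_apply,
    ContinuousLinearMap.add_apply, ContinuousLinearMap.zero_apply,
    ContinuousLinearMap.proj_apply, Pi.single_apply, smul_eq_mul, kron_def]
  split_ifs <;> ring

lemma dQ_bb (i j : Fin n) (m : K n) :
    dQ n x (Sum.inr i) (Sum.inr j) m
      = kron ((Sum.inl j : K n) = m) * kd ((j : ℕ) + 1) (i : ℕ)
        - kron ((Sum.inl i : K n) = m) * kd ((i : ℕ) + 1) (j : ℕ) := by
  unfold dQ
  have hfun : (fun y : K n → ℝ => QT n y (Sum.inr i) (Sum.inr j))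
      = fun y => y (Sum.inl j) * kd ((j : ℕ) + 1) (i : ℕ)
          - y (Sum.inl i) * kd ((i : ℕ) + 1) (j : ℕ) :=
    funext fun y => QT_bb y i j
  rw [hfun]
  have h2 : fderiv ℝ (fun y : K n → ℝ => y (Sum.inl j) * kd ((j : ℕ) + 1) (i : ℕ)
        - y (Sum.inl i) * kd ((i : ℕ) + 1) (j : ℕ)) x
      = (kd ((j : ℕ) + 1) (i : ℕ)) • (ContinuousLinearMap.proj (Sum.inl j) : (K n → ℝ) →L[ℝ] ℝ)
        - (kd ((i : ℕ) + 1) (j : ℕ)) • (ContinuousLinearMap.proj (Sum.inl i) : (K n → ℝ) →L[ℝ] ℝ) :=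
    (((hasFD_coord x (Sum.inl j)).mul_const _).sub ((hasFD_coord x (Sum.inl i)).mul_const _)).fderiv
  rw [h2]
  simp only [ContinuousLinearMap.sub_apply, ContinuousLinearMap.smul_apply,
    ContinuousLinearMap.proj_apply, Pi.single_apply, smul_eq_mul, kron_def]
  split_ifs <;> ring

end deriv

noncomputable def Jsum (n : ℕ) (x : K n → ℝ) (u v w : K n) : ℝ :=
  ∑ m, (QT n x m w * dQ n x u v m + QT n x m u * dQ n x v w m + QT n x m v * dQ n x w u m)

lemma Jsum_def (n : ℕ) (x : K n → ℝ) (u v w : K n) :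
    Jsum n x u v w
      = ∑ m, (QT n x m w * dQ n x u v m + QT n x m u * dQ n x v w m
          + QT n x m v * dQ n x w u m) := rfl

lemma Jsum_cyc (n : ℕ) (x : K n → ℝ) (u v w : K n) :
    Jsum n x u v w = Jsum n x v w u :=
  Finset.sum_congr rfl fun m _ => by ring

set_option maxHeartbeats 4000000 in
lemma nat_aaa (A B : ℕ → ℝ) (iv jv lv : ℕ) :
    (A iv * A lv * (kd (iv) (lv + 1) - kd (iv + 1) (lv)) * A jv * (kd (iv) (jv + 1) - kd (iv + 1) (jv)) + A iv * A jv * (kd (iv) (jv + 1) - kd (iv + 1) (jv)) * A lv * (kd (lv) (iv + 1) - kd (lv + 1) (iv)))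
      + (A jv * A lv * (kd (jv) (lv + 1) - kd (jv + 1) (lv)) * A iv * (kd (iv) (jv + 1) - kd (iv + 1) (jv)) + A jv * A iv * (kd (jv) (iv + 1) - kd (jv + 1) (iv)) * A lv * (kd (jv) (lv + 1) - kd (jv + 1) (lv)))
      + (A lv * A iv * (kd (lv) (iv + 1) - kd (lv + 1) (iv)) * A jv * (kd (jv) (lv + 1) - kd (jv + 1) (lv)) + A lv * A jv * (kd (lv) (jv + 1) - kd (lv + 1) (jv)) * A iv * (kd (lv) (iv + 1) - kd (lv + 1) (iv))) = 0 := by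
  simp only [kd_def]
  split_ifs <;>
    first
      | (exfalso; omega)
      | ring1
      | (subst_vars; first | ring1 | (exfalso; omega))

lemma J_aaa {n : ℕ} (x : K n → ℝ) (A B : ℕ → ℝ)
    (hA : ∀ p : Fin n, x (Sum.inl p) = A (p : ℕ))
    (hB : ∀ p : Fin n, x (Sum.inr p) = B (p : ℕ))
    (i j l : Fin n) :
    Jsum n x (Sum.inl i) (Sum.inl j) (Sum.inl l) = 0 := by
  rw [Jsum_def]
  simp only [Fintype.sum_sum_type]
  rw [show (∑ r : Fin n, (QT n x (Sum.inl r) (Sum.inl l) * dQ n x (Sum.inl i) (Sum.inl j) (Sum.inl r) + QT n x (Sum.inl r) (Sum.inl i) * dQ n x (Sum.inl j) (Sum.inl l) (Sum.inl r) + QT n x (Sum.inl r) (Sum.inl j) * dQ n x (Sum.inl l) (Sum.inl i) (Sum.inl r))) = ∑ r : Fin n, (kron (i = r) * (x (Sum.inl r) * x (Sum.inl l) * (kd ((r : ℕ)) ((l : ℕ) + 1) - kd ((r : ℕ) + 1) ((l : ℕ))) * x (Sum.inl j) * (kd ((i : ℕ)) ((j : ℕ) + 1) - kd ((i : ℕ)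 + 1) ((j : ℕ))) + x (Sum.inl r) * x (Sum.inl j) * (kd ((r : ℕ)) ((j : ℕ) + 1) - kd ((r : ℕ) + 1) ((j : ℕ))) * x (Sum.inl l) * (kd ((l : ℕ)) ((i : ℕ) + 1) - kd ((l : ℕ) + 1) ((i : ℕ)))) + kron (j = r) * (x (Sum.inl r) * x (Sum.inl l) * (kd ((r : ℕ)) ((l : ℕ) + 1) - kd ((r : ℕ) + 1) ((l : ℕ))) * x (Sum.inl i) * (kd ((i : ℕ)) ((j : ℕ) + 1) - kd ((i : ℕ) + 1) ((j : ℕ))) + x (Sum.inl r) * x (Sum.inl i) * (kd ((r : ℕ)) ((i : ℕ) + 1) - kd ((r : ℕ) + 1) ((i : ℕ))) * x (Sum.inl l) * (kd ((j : ℕ)) ((l : ℕ) + 1) - kd ((j : ℕ) + 1) ((l : ℕ)))) + kron (l = r) * (x (Sum.inl r) * x (Sum.inl i) * (kd ((r : ℕ)) ((i : ℕ) + 1) - kd ((r : ℕ) + 1) ((i : ℕ))) * x (Sum.inl j) * (kd ((j : ℕ)) ((l : ℕ) + 1) - kd ((j : ℕ) + 1) ((l : ℕ))) + x (Sum.inl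 r) * x (Sum.inl j) * (kd ((r : ℕ)) ((j : ℕ) + 1) - kd ((r : ℕ) + 1) ((j : ℕ))) * x (Sum.inl i) * (kd ((l : ℕ)) ((i : ℕ) + 1) - kd ((l : ℕ) + 1) ((i : ℕ))))) from
      Finset.sum_congr rfl fun r _ => by
        simp only [QT_aa, QT_ab, QT_ba, QT_bb, dQ_aa, dQ_ab, dQ_ba, dQ_bb, kron_inl_inl, kron_inl_inr, kron_inr_inl, kron_inr_inr]
        ring,
    show (∑ r : Fin n, (QT n x (Sum.inr r) (Sum.inl l) * dQ n x (Sum.inl i) (Sum.inl j) (Sum.inr r) + QT n x (Sum.inr r) (Sum.inl i) * dQ n x (Sum.inl j) (Sum.inl l) (Sum.inr r) + QT n x (Sum.inr r) (Sum.inl j) * dQ n x (Sum.inl l) (Sum.inl i) (Sum.inr r))) = 0 from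
      Finset.sum_eq_zero fun r _ => by
        simp only [QT_aa, QT_ab, QT_ba, QT_bb, dQ_aa, dQ_ab, dQ_ba, dQ_bb, kron_inl_inl, kron_inl_inr, kron_inr_inl, kron_inr_inr]
        ring,
    Finset.sum_add_distrib,
    Finset.sum_add_distrib,
    sum_kron,
    sum_kron,
    sum_kron,
    add_zero]
  simp only [hA, hB]
  linear_combination nat_aaa A B (i : ℕ) (j : ℕ) (l : ℕ)

set_option maxHeartbeats 4000000 in
lemma nat_aab (A B : ℕ → ℝ) (iv jv lv : ℕ) :
    (A iv * (1 + B lv) * (kd (iv) (lv) - kd (iv + 1) (lv)) * A jv * (kd (iv) (jv + 1) - kd (iv + 1) (jv)) - A iv * A jv * (kd (iv) (jv + 1) - kd (iv + 1) (jv)) * (1 + B lv) * (kd (iv) (lv) - kd (iv + 1) (lv)))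
      + (A jv * (1 + B lv) * (kd (jv) (lv) - kd (jv + 1) (lv)) * A iv * (kd (iv) (jv + 1) - kd (iv + 1) (jv)) + A jv * A iv * (kd (jv) (iv + 1) - kd (jv + 1) (iv)) * (1 + B lv) * (kd (jv) (lv) - kd (jv + 1) (lv)))
      + (-(A iv * (1 + B lv) * (kd (iv) (lv) - kd (iv + 1) (lv))) * (A jv * (kd (jv) (lv) - kd (jv + 1) (lv))) + (A jv * (1 + B lv) * (kd (jv) (lv) - kd (jv + 1) (lv))) * (A iv * (kd (iv) (lv) - kd (iv + 1) (lv)))) = 0 := by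
  simp only [kd_def]
  split_ifs <;>
    first
      | (exfalso; omega)
      | ring1
      | (subst_vars; first | ring1 | (exfalso; omega))

lemma J_aab {n : ℕ} (x : K n → ℝ) (A B : ℕ → ℝ)
    (hA : ∀ p : Fin n, x (Sum.inl p) = A (p : ℕ))
    (hB : ∀ p : Fin n, x (Sum.inr p) = B (p : ℕ))
    (i j l : Fin n) :
    Jsum n x (Sum.inl i) (Sum.inl j) (Sum.inr l) = 0 := by
  rw [Jsum_def]
  simp only [Fintype.sum_sum_type]
  rw [show (∑ r : Fin n, (QT n x (Sum.inl r) (Sum.inr l) * dQ n x (Sum.inl i) (Sum.inl j) (Sum.inl r) + QT n x (Sum.inl r) (Sum.inl i) * dQ n x (Sum.inl j) (Sum.inr l) (Sum.inl r) + QT n x (Sum.inl r) (Sum.inl j) * dQ n x (Sum.inr l) (Sum.inl i) (Sum.inl r))) = ∑ r : Fin n, (kron (i = r) * (x (Sum.inl r) * (1 + x (Sum.inr l)) * (kd ((r : ℕ)) ((l : ℕ)) - kd ((r : ℕ) + 1) ((l : ℕ))) * x (Sum.inl j) * (kd ((i : ℕ)) ((j : ℕ) + 1) - kd ((i : ℕ)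 + 1) ((j : ℕ))) - x (Sum.inl r) * x (Sum.inl j) * (kd ((r : ℕ)) ((j : ℕ) + 1) - kd ((r : ℕ) + 1) ((j : ℕ))) * (1 + x (Sum.inr l)) * (kd ((i : ℕ)) ((l : ℕ)) - kd ((i : ℕ) + 1) ((l : ℕ)))) + kron (j = r) * (x (Sum.inl r) * (1 + x (Sum.inr l)) * (kd ((r : ℕ)) ((l : ℕ)) - kd ((r : ℕ) + 1) ((l : ℕ))) * x (Sum.inl i) * (kd ((i : ℕ)) ((j : ℕ) + 1) - kd ((i : ℕ) + 1) ((j : ℕ))) + x (Sum.inl r) * x (Sum.inl i) * (kd ((r : ℕ)) ((i : ℕ) + 1) - kd ((r : ℕ) + 1) ((i : ℕ))) * (1 + x (Sum.inr l)) * (kd ((j : ℕ)) ((l : ℕ)) - kd ((j : ℕ) + 1) ((l : ℕ))))) from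
      Finset.sum_congr rfl fun r _ => by
        simp only [QT_aa, QT_ab, QT_ba, QT_bb, dQ_aa, dQ_ab, dQ_ba, dQ_bb, kron_inl_inl, kron_inl_inr, kron_inr_inl, kron_inr_inr]
        ring,
    show (∑ r : Fin n, (QT n x (Sum.inr r) (Sum.inr l) * dQ n x (Sum.inl i) (Sum.inl j) (Sum.inr r) + QT n x (Sum.inr r) (Sum.inl i) * dQ n x (Sum.inl j) (Sum.inr l) (Sum.inr r) + QT n x (Sum.inr r) (Sum.inl j) * dQ n x (Sum.inr l) (Sum.inl i) (Sum.inr r))) = ∑ r : Fin n, (kron (l = r) * (-(x (Sum.inl i) * (1 + x (Sum.inr r)) * (kd ((i : ℕ)) ((r : ℕ)) - kd ((i : ℕ) + 1) ((r : ℕ)))) * (x (Sum.inl j) * (kd ((j : ℕ)) ((l : ℕ)) - kd ((j : ℕ) + 1) ((l : ℕ)))) + (x (Sum.inl j) * (1 + x (Sum.inr r)) * (kd ((j : ℕ)) ((r : ℕ)) - kd ((j : ℕ) + 1) ((r : ℕ)))) * (x (Sum.inl i) * (kd ((i : ℕ)) ((l : ℕ)) - kd ((i : ℕ) + 1) ((l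 : ℕ)))))) from
      Finset.sum_congr rfl fun r _ => by
        simp only [QT_aa, QT_ab, QT_ba, QT_bb, dQ_aa, dQ_ab, dQ_ba, dQ_bb, kron_inl_inl, kron_inl_inr, kron_inr_inl, kron_inr_inr]
        ring,
    Finset.sum_add_distrib,
    sum_kron,
    sum_kron,
    sum_kron]
  simp only [hA, hB]
  linear_combination nat_aab A B (i : ℕ) (j : ℕ) (l : ℕ)

set_option maxHeartbeats 4000000 in
lemma nat_abb (A B : ℕ → ℝ) (iv jv lv : ℕ) :
    (A iv * (1 + B lv) * (kd (iv) (lv) - kd (iv + 1) (lv)) * (1 + B jv) * (kd (iv) (jv) - kd (iv + 1) (jv)) - A iv * (1 + B jv) * (kd (iv) (jv) - kd (iv + 1) (jv)) * (1 + B lv) * (kd (iv) (lv) - kd (iv + 1) (lv)))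
      + (A lv * A iv * (kd (lv) (iv + 1) - kd (lv + 1) (iv)) * kd (lv + 1) (jv))
      + (-(A jv * A iv * (kd (jv) (iv + 1) - kd (jv + 1) (iv)) * kd (jv + 1) (lv)))
      + ((A lv * kd (lv + 1) (jv) - A jv * kd (jv + 1) (lv)) * (A iv * (kd (iv) (jv) - kd (iv + 1) (jv))))
      + (-((A jv * kd (jv + 1) (lv) - A lv * kd (lv + 1) (jv)) * (A iv * (kd (iv) (lv) - kd (iv + 1) (lv))))) = 0 := by
  simp only [kd_def]
  split_ifs <;>
    first
      | (exfalso; omega)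
      | ring1
      | (subst_vars; first | ring1 | (exfalso; omega))

lemma J_abb {n : ℕ} (x : K n → ℝ) (A B : ℕ → ℝ)
    (hA : ∀ p : Fin n, x (Sum.inl p) = A (p : ℕ))
    (hB : ∀ p : Fin n, x (Sum.inr p) = B (p : ℕ))
    (i j l : Fin n) :
    Jsum n x (Sum.inl i) (Sum.inr j) (Sum.inr l) = 0 := by
  rw [Jsum_def]
  simp only [Fintype.sum_sum_type]
  rw [show (∑ r : Fin n, (QT n x (Sum.inl r) (Sum.inr l) * dQ n x (Sum.inl i) (Sum.inr j) (Sum.inl r) + QT n x (Sum.inl r) (Sum.inl i) * dQ n x (Sum.inr j) (Sum.inr l) (Sum.inl r) + QT n x (Sum.inl r) (Sum.inr j) * dQ n x (Sum.inr l) (Sum.inl i) (Sum.inl r))) = ∑ r : Fin n, (kron (i = r) * (x (Sum.inl r) * (1 + x (Sum.inr l)) * (kd ((r : ℕ)) ((l : ℕ)) - kd ((r : ℕ) + 1) ((l : ℕ))) * (1 + x (Sum.inr j)) * (kd ((i : ℕ)) ((j : ℕ)) - kd ((i : ℕ) + 1) ((j : ℕ))) - x (Sum.inl r) * (1 + x (Sum.inr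 j)) * (kd ((r : ℕ)) ((j : ℕ)) - kd ((r : ℕ) + 1) ((j : ℕ))) * (1 + x (Sum.inr l)) * (kd ((i : ℕ)) ((l : ℕ)) - kd ((i : ℕ) + 1) ((l : ℕ)))) + kron (l = r) * (x (Sum.inl r) * x (Sum.inl i) * (kd ((r : ℕ)) ((i : ℕ) + 1) - kd ((r : ℕ) + 1) ((i : ℕ))) * kd ((l : ℕ) + 1) ((j : ℕ))) + kron (j = r) * (-(x (Sum.inl r) * x (Sum.inl i) * (kd ((r : ℕ)) ((i : ℕ) + 1) - kd ((r : ℕ) + 1) ((i : ℕ))) * kd ((j : ℕ) + 1) ((l : ℕ))))) from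
      Finset.sum_congr rfl fun r _ => by
        simp only [QT_aa, QT_ab, QT_ba, QT_bb, dQ_aa, dQ_ab, dQ_ba, dQ_bb, kron_inl_inl, kron_inl_inr, kron_inr_inl, kron_inr_inr]
        ring,
    show (∑ r : Fin n, (QT n x (Sum.inr r) (Sum.inr l) * dQ n x (Sum.inl i) (Sum.inr j) (Sum.inr r) + QT n x (Sum.inr r) (Sum.inl i) * dQ n x (Sum.inr j) (Sum.inr l) (Sum.inr r) + QT n x (Sum.inr r) (Sum.inr j) * dQ n x (Sum.inr l) (Sum.inl i) (Sum.inr r))) = ∑ r : Fin n, (kron (j = r) * ((x (Sum.inl l) * kd ((l : ℕ) + 1) ((r : ℕ)) - x (Sum.inl r) * kd ((r : ℕ) + 1) ((l : ℕ))) * (x (Sum.inl i) * (kd ((i : ℕ)) ((j : ℕ)) - kd ((i : ℕ) + 1) ((j : ℕ))))) + kron (l = r) * (-((x (Sum.inl j) * kd ((j : ℕ) + 1) ((r : ℕ)) - x (Sum.inl r) * kd ((r : ℕ) + 1) ((j : ℕ))) * (x (Sum.inl i) * (kd ((i : ℕ)) ((l : ℕ)) - kd ((i : ℕ) + 1) ((l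 : ℕ))))))) from
      Finset.sum_congr rfl fun r _ => by
        simp only [QT_aa, QT_ab, QT_ba, QT_bb, dQ_aa, dQ_ab, dQ_ba, dQ_bb, kron_inl_inl, kron_inl_inr, kron_inr_inl, kron_inr_inr]
        ring,
    Finset.sum_add_distrib,
    Finset.sum_add_distrib,
    Finset.sum_add_distrib,
    sum_kron,
    sum_kron,
    sum_kron,
    sum_kron,
    sum_kron]
  simp only [hA, hB]
  linear_combination nat_abb A B (i : ℕ) (j : ℕ) (l : ℕ)

set_option maxHeartbeats 4000000 in
lemma nat_bbb (A B : ℕ → ℝ) (iv jv lv : ℕ) :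
    (-(A iv * (1 + B lv) * (kd (iv) (lv) - kd (iv + 1) (lv)) * kd (iv + 1) (jv)) + A iv * (1 + B jv) * (kd (iv) (jv) - kd (iv + 1) (jv)) * kd (iv + 1) (lv))
      + (A jv * (1 + B lv) * (kd (jv) (lv) - kd (jv + 1) (lv)) * kd (jv + 1) (iv) - A jv * (1 + B iv) * (kd (jv) (iv) - kd (jv + 1) (iv)) * kd (jv + 1) (lv))
      + (A lv * (1 + B iv) * (kd (lv) (iv) - kd (lv + 1) (iv)) * kd (lv + 1) (jv) - A lv * (1 + B jv) * (kd (lv) (jv) - kd (lv + 1) (jv)) * kd (lv + 1) (iv)) = 0 := by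
  simp only [kd_def]
  split_ifs <;>
    first
      | (exfalso; omega)
      | ring1
      | (subst_vars; first | ring1 | (exfalso; omega))

lemma J_bbb {n : ℕ} (x : K n → ℝ) (A B : ℕ → ℝ)
    (hA : ∀ p : Fin n, x (Sum.inl p) = A (p : ℕ))
    (hB : ∀ p : Fin n, x (Sum.inr p) = B (p : ℕ))
    (i j l : Fin n) :
    Jsum n x (Sum.inr i) (Sum.inr j) (Sum.inr l) = 0 := by
  rw [Jsum_def]
  simp only [Fintype.sum_sum_type]
  rw [show (∑ r : Fin n, (QT n x (Sum.inl r) (Sum.inr l) * dQ n x (Sum.inr i) (Sum.inr j) (Sum.inl r) + QT n x (Sum.inl r) (Sum.inr i) * dQ n x (Sum.inr j) (Sum.inr l) (Sum.inl r) + QT n x (Sum.inl r) (Sum.inr j) * dQ n x (Sum.inr l) (Sum.inr i) (Sum.inl r))) = ∑ r : Fin n, (kron (i = r) * (-(x (Sum.inl r) * (1 + x (Sum.inr l)) * (kd ((r : ℕ)) ((l : ℕ)) - kd ((r : ℕ) + 1) ((l : ℕ))) * kd ((i : ℕ) + 1) ((j : ℕ))) + x (Sum.inl r) * (1 + x (Sum.inr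 j)) * (kd ((r : ℕ)) ((j : ℕ)) - kd ((r : ℕ) + 1) ((j : ℕ))) * kd ((i : ℕ) + 1) ((l : ℕ))) + kron (j = r) * (x (Sum.inl r) * (1 + x (Sum.inr l)) * (kd ((r : ℕ)) ((l : ℕ)) - kd ((r : ℕ) + 1) ((l : ℕ))) * kd ((j : ℕ) + 1) ((i : ℕ)) - x (Sum.inl r) * (1 + x (Sum.inr i)) * (kd ((r : ℕ)) ((i : ℕ)) - kd ((r : ℕ) + 1) ((i : ℕ))) * kd ((j : ℕ) + 1) ((l : ℕ))) + kron (l = r) * (x (Sum.inl r) * (1 + x (Sum.inr i)) * (kd ((r : ℕ)) ((i : ℕ)) - kd ((r : ℕ) + 1) ((i : ℕ))) * kd ((l : ℕ) + 1) ((j : ℕ)) - x (Sum.inl r) * (1 + x (Sum.inr j)) * (kd ((r : ℕ)) ((j : ℕ)) - kd ((r : ℕ) + 1) ((j : ℕ))) * kd ((l : ℕ) + 1) ((i : ℕ)))) from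
      Finset.sum_congr rfl fun r _ => by
        simp only [QT_aa, QT_ab, QT_ba, QT_bb, dQ_aa, dQ_ab, dQ_ba, dQ_bb, kron_inl_inl, kron_inl_inr, kron_inr_inl, kron_inr_inr]
        ring,
    show (∑ r : Fin n, (QT n x (Sum.inr r) (Sum.inr l) * dQ n x (Sum.inr i) (Sum.inr j) (Sum.inr r) + QT n x (Sum.inr r) (Sum.inr i) * dQ n x (Sum.inr j) (Sum.inr l) (Sum.inr r) + QT n x (Sum.inr r) (Sum.inr j) * dQ n x (Sum.inr l) (Sum.inr i) (Sum.inr r))) = 0 from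
      Finset.sum_eq_zero fun r _ => by
        simp only [QT_aa, QT_ab, QT_ba, QT_bb, dQ_aa, dQ_ab, dQ_ba, dQ_bb, kron_inl_inl, kron_inl_inr, kron_inr_inl, kron_inr_inr]
        ring,
    Finset.sum_add_distrib,
    Finset.sum_add_distrib,
    sum_kron,
    sum_kron,
    sum_kron,
    add_zero]
  simp only [hA, hB]
  linear_combination nat_bbb A B (i : ℕ) (j : ℕ) (l : ℕ)


section glue
variable {n : ℕ}

lemma contDiff_coord (u : K n) : ContDiff ℝ ⊤ (fun y : K n → ℝ => y u) :=
  (ContinuousLinearMap.proj (R := ℝ) (φ := fun _ : K n => ℝ) u).contDiff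

lemma contDiff_QT (u v : K n) : ContDiff ℝ ⊤ (fun x : K n → ℝ => QT n x u v) := by
  rcases u with i | i <;> rcases v with j | j
  · have h : (fun x : K n → ℝ => QT n x (Sum.inl i) (Sum.inl j))
        = fun x => x (Sum.inl i) * x (Sum.inl j)
            * (kd (i : ℕ) ((j : ℕ) + 1) - kd ((i : ℕ) + 1) (j : ℕ)) :=
      funext fun x => QT_aa x i j
    rw [h]
    exact ((contDiff_coord _).mul (contDiff_coord _)).mul contDiff_const
  · have h : (fun x : K n → ℝ => QT n x (Sum.inl i) (Sum.inr j))
        = fun x => x (Sum.inl i) * (1 + x (Sum.inr j))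
            * (kd (i : ℕ) (j : ℕ) - kd ((i : ℕ) + 1) (j : ℕ)) :=
      funext fun x => QT_ab x i j
    rw [h]
    exact ((contDiff_coord _).mul (contDiff_const.add (contDiff_coord _))).mul contDiff_const
  · have h : (fun x : K n → ℝ => QT n x (Sum.inr i) (Sum.inl j))
        = fun x => -(x (Sum.inl j) * (1 + x (Sum.inr i))
            * (kd (j : ℕ) (i : ℕ) - kd ((j : ℕ) + 1) (i : ℕ))) :=
      funext fun x => QT_ba x j i
    rw [h]
    exact (((contDiff_coord _).mul (contDiff_const.add (contDiff_coord _))).mul contDiff_const).neg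
  · have h : (fun x : K n → ℝ => QT n x (Sum.inr i) (Sum.inr j))
        = fun x => x (Sum.inl j) * kd ((j : ℕ) + 1) (i : ℕ)
            - x (Sum.inl i) * kd ((i : ℕ) + 1) (j : ℕ) :=
      funext fun x => QT_bb x i j
    rw [h]
    exact ((contDiff_coord _).mul contDiff_const).sub ((contDiff_coord _).mul contDiff_const)

lemma kd_comm (a b : ℕ) : kd a b = kd b a := by
  simp [kd_def, eq_comm]

lemma QT_antisym (x : K n → ℝ) (u v : K n) : QT n x v u = - QT n x u v := by
  rcases u with i | i <;> rcases v with j | j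
  · rw [QT_aa, QT_aa, kd_comm ((j : ℕ)) ((i : ℕ) + 1), kd_comm ((j : ℕ) + 1) ((i : ℕ))]
    ring
  · rw [QT_ba, QT_ab]
  · rw [QT_ab, QT_ba]
    ring
  · rw [QT_bb, QT_bb]
    ring

lemma toda_hJ (x : K n → ℝ) (u v w : K n) : Jsum n x u v w = 0 := by
  obtain ⟨A, hA⟩ : ∃ A : ℕ → ℝ, ∀ p : Fin n, x (Sum.inl p) = A (p : ℕ) :=
    ⟨fun m => if h : m < n then x (Sum.inl ⟨m, h⟩) else 0, fun p => by simp⟩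
  obtain ⟨B, hB⟩ : ∃ B : ℕ → ℝ, ∀ p : Fin n, x (Sum.inr p) = B (p : ℕ) :=
    ⟨fun m => if h : m < n then x (Sum.inr ⟨m, h⟩) else 0, fun p => by simp⟩
  rcases u with i | i <;> rcases v with j | j <;> rcases w with l | l
  · exact J_aaa x A B hA hB i j l
  · exact J_aab x A B hA hB i j l
  · rw [Jsum_cyc, Jsum_cyc]
    exact J_aab x A B hA hB l i j
  · exact J_abb x A B hA hB i j l
  · rw [Jsum_cyc]
    exact J_aab x A B hA hB j l i
  · rw [Jsum_cyc]
    exact J_abb x A B hA hB j l i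
  · rw [Jsum_cyc, Jsum_cyc]
    exact J_abb x A B hA hB l i j
  · exact J_bbb x A B hA hB i j l

end glue


/-- The linear Toda bracket `π₁` and the quadratic Toda bracket `π₂`
on `ℝ^{2n}` are compatible: their sum `π₁ + π₂` also satisfies the Jacobi identity. -/
theorem toda_brackets_compatible (n : ℕ) (F G H : (Fin n ⊕ Fin n → ℝ) → ℝ)
    (hF : ContDiff ℝ ⊤ F) (hG : ContDiff ℝ ⊤ G) (hH : ContDiff ℝ ⊤ H) :
    pb (fun x u v => todaLin n n x u v + todaQuad n n x u v)
        (pb (fun x u v => todaLin n n x u v + todaQuad n n x u v) F G) H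
      + pb (fun x u v => todaLin n n x u v + todaQuad n n x u v)
        (pb (fun x u v => todaLin n n x u v + todaQuad n n x u v) G H) F
      + pb (fun x u v => todaLin n n x u v + todaQuad n n x u v)
        (pb (fun x u v => todaLin n n x u v + todaQuad n n x u v) H F) G = 0 := by
  exact jacobi_of_bivector (fun x u v => todaLin n n x u v + todaQuad n n x u v)
    (fun i j => contDiff_QT i j)
    (fun x i j => QT_antisym x i j)
    (fun x i j l => toda_hJ x i j l)
    F G H hF hG hH
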